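/- For all real x > -1 and all integers k, the integral over [0, 2π] of cos(k y) · (sin(y/2))^x dy equals 2π cos(kπ) Γ(x+1) / (2^x Γ(1+x/2+k) Γ(1+x/2−k)). -/

import Mathlib

open intervalIntegral Real

open MeasureTheory Set

noncomputable def fsub (t : ℝ) : ℝ := (1 - Real.cos t) / 2

lemma fsub_deriv (t : ℝ) : HasDerivAt fsub (Real.sin t / 2) t := by
  show HasDerivAt (fun t => (1 - Real.cos t) / 2) _ t
  simpa using ((Real.hasDerivAt_cos t).const_sub 1).div_const 2

lemma fsub_inj : InjOn fsub (Ioo 0 π) := by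
  intro s hs t ht h
  have : Real.cos s = Real.cos t := by
    have := h; unfold fsub at this; linarith
  exact Real.injOn_cos ⟨hs.1.le, hs.2.le⟩ ⟨ht.1.le, ht.2.le⟩ this

lemma fsub_image : fsub '' (Ioo 0 π) = Ioo 0 1 := by
  ext u
  constructor
  · rintro ⟨t, ht, rfl⟩
    have h1 : Real.cos t < 1 := by
      have := Real.cos_lt_cos_of_nonneg_of_le_pi le_rfl ht.2.le ht.1
      simpa using this
    have h2 : -1 < Real.cos t := by
      have := Real.cos_lt_cos_of_nonneg_of_le_pi ht.1.le le_rfl ht.2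
      simpa using this
    constructor <;> · unfold fsub; linarith
  · intro hu
    refine ⟨Real.arccos (1 - 2*u), ⟨?_, ?_⟩, ?_⟩
    · exact Real.arccos_pos.2 (by linarith [hu.1])
    · refine lt_of_le_of_ne (Real.arccos_le_pi _) ?_
      intro h
      have := Real.arccos_eq_pi.1 h
      linarith [hu.2]
    · unfold fsub
      rw [Real.cos_arccos (by linarith [hu.2]) (by linarith [hu.1])]
      ring

lemma comp_eq (x : ℝ) {t : ℝ} (ht : t ∈ Ioo 0 π) :
    |Real.sin t / 2| • (fsub t ^ ((x-1)/2) * (1 - fsub t) ^ ((x-1)/2))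
      = (2:ℝ)^(-x) * Real.sin t ^ x := by
  have hst : 0 < Real.sin t := Real.sin_pos_of_pos_of_lt_pi ht.1 ht.2
  have h1 : fsub t * (1 - fsub t) = (Real.sin t / 2)^(2:ℕ) := by
    unfold fsub
    have := Real.sin_sq_add_cos_sq t
    ring_nf
    nlinarith [Real.sin_sq_add_cos_sq t]
  have h0 : (0:ℝ) ≤ fsub t := by
    unfold fsub; nlinarith [Real.cos_le_one t]
  have h0' : (0:ℝ) ≤ 1 - fsub t := by
    unfold fsub; nlinarith [Real.neg_one_le_cos t]
  have key : fsub t ^ ((x-1)/2) * (1 - fsub t) ^ ((x-1)/2)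
      = (Real.sin t / 2) ^ (x - 1) := by
    rw [← Real.mul_rpow h0 h0', h1]
    rw [← Real.rpow_natCast (Real.sin t / 2) 2, ← Real.rpow_mul (by positivity)]
    push_cast
    rw [show (2:ℝ)*((x-1)/2) = x-1 by ring]
  rw [key, abs_of_nonneg (by positivity : (0:ℝ) ≤ Real.sin t / 2), smul_eq_mul, mul_comm,
    ← Real.rpow_add_one (by positivity : Real.sin t / 2 ≠ 0)]
  rw [show x - 1 + 1 = x by ring, Real.div_rpow hst.le (by norm_num : (0:ℝ) ≤ 2), Real.rpow_neg (by norm_num : (0:ℝ) ≤ 2)]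
  ring

lemma beta_complex_eq_real (x : ℝ) (s : ℝ) (hs : s ∈ Icc (0:ℝ) 1) :
    (s:ℂ) ^ (((x+1)/2 : ℂ) - 1) * (1 - (s:ℂ)) ^ (((x+1)/2 : ℂ) - 1)
      = ((s ^ ((x-1)/2) * (1-s) ^ ((x-1)/2) : ℝ) : ℂ) := by
  have h1 : ((x+1)/2 : ℂ) - 1 = ((((x-1)/2 : ℝ)) : ℂ) := by push_cast; ring
  have h2 : (1 - (s:ℂ)) = (((1 - s : ℝ)) : ℂ) := by push_cast; ring
  rw [h1, h2, ← Complex.ofReal_cpow hs.1, ← Complex.ofReal_cpow (by linarith [hs.2])]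
  push_cast; ring

lemma beta_value (x : ℝ) (hx : -1 < x) :
    ∫ s in (0:ℝ)..1, s ^ ((x-1)/2) * (1-s) ^ ((x-1)/2)
      = Real.Gamma ((x+1)/2) ^ 2 / Real.Gamma (x+1) := by
  have ha : (0:ℝ) < (x+1)/2 := by linarith
  have hre : 0 < (((x+1)/2 : ℂ)).re := by norm_num [Complex.ofReal_re]; linarith
  have hbeta := Complex.Gamma_mul_Gamma_eq_betaIntegral hre hre
  have hsum : ((x+1)/2 : ℂ) + ((x+1)/2 : ℂ) = ((x+1 : ℝ) : ℂ) := by push_cast; ring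
  rw [hsum] at hbeta
  have heq : Complex.betaIntegral ((x+1)/2) ((x+1)/2)
      = ((∫ s in (0:ℝ)..1, s ^ ((x-1)/2) * (1-s) ^ ((x-1)/2) : ℝ) : ℂ) := by
    rw [Complex.betaIntegral, ← intervalIntegral.integral_ofReal]
    refine intervalIntegral.integral_congr ?_
    intro s hs
    rw [Set.uIcc_of_le (by norm_num : (0:ℝ) ≤ 1)] at hs
    exact beta_complex_eq_real x s hs
  rw [heq] at hbeta
  have hc : (((x+1)/2 : ℝ) : ℂ) = ((x+1)/2 : ℂ) := by push_cast; ring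
  rw [← hc, Complex.Gamma_ofReal, Complex.Gamma_ofReal] at hbeta
  have : ((Real.Gamma ((x+1)/2) * Real.Gamma ((x+1)/2) : ℝ) : ℂ)
      = ((Real.Gamma (x+1) * ∫ s in (0:ℝ)..1, s ^ ((x-1)/2) * (1-s) ^ ((x-1)/2) : ℝ) : ℂ) := by
    push_cast; rw [← hbeta]
  have hreal := Complex.ofReal_inj.1 this
  have hG : Real.Gamma (x+1) ≠ 0 := (Real.Gamma_pos_of_pos (by linarith)).ne'
  field_simp
  rw [sq]
  linarith [hreal]

lemma beta_integrable (x : ℝ) (hx : -1 < x) :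
    IntegrableOn (fun s : ℝ => s ^ ((x-1)/2) * (1-s) ^ ((x-1)/2)) (Ioo 0 1) := by
  have hre : 0 < (((x+1)/2 : ℂ)).re := by norm_num [Complex.ofReal_re]; linarith
  have h := Complex.betaIntegral_convergent hre hre
  have h2 : IntegrableOn (fun s : ℝ => (s:ℂ) ^ (((x+1)/2 : ℂ) - 1) * (1 - (s:ℂ)) ^ (((x+1)/2 : ℂ) - 1))
      (Ioo 0 1) := ((intervalIntegrable_iff_integrableOn_Ioc_of_le (by norm_num)).1 h).mono_set
      Ioo_subset_Ioc_self
  have h3 : IntegrableOn (fun s : ℝ =>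
      ((s ^ ((x-1)/2) * (1-s) ^ ((x-1)/2) : ℝ) : ℂ)) (Ioo 0 1) := by
    refine h2.congr_fun (fun s hs => ?_) measurableSet_Ioo
    exact beta_complex_eq_real x s ⟨hs.1.le, hs.2.le⟩
  have h4 := Integrable.re h3
  simp at h4
  exact h4

lemma fsub_hasDerivWithin : ∀ t ∈ Ioo (0:ℝ) π,
    HasDerivWithinAt fsub (Real.sin t / 2) (Ioo 0 π) t :=
  fun t _ => (fsub_deriv t).hasDerivWithinAt

lemma sin_rpow_integrableOn (x : ℝ) (hx : -1 < x) :
    IntegrableOn (fun t : ℝ => Real.sin t ^ x) (Ioo 0 π) := by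
  have h := (MeasureTheory.integrableOn_image_iff_integrableOn_abs_deriv_smul
    measurableSet_Ioo fsub_hasDerivWithin fsub_inj
    (fun s : ℝ => s ^ ((x-1)/2) * (1-s) ^ ((x-1)/2))).1
  rw [fsub_image] at h
  have h2 := h (beta_integrable x hx)
  have h3 : IntegrableOn (fun t : ℝ => (2:ℝ)^(-x) * Real.sin t ^ x) (Ioo 0 π) := by
    refine h2.congr_fun (fun t ht => ?_) measurableSet_Ioo
    exact comp_eq x ht
  have h4 : IntegrableOn (fun t : ℝ => (2:ℝ)^x * ((2:ℝ)^(-x) * Real.sin t ^ x)) (Ioo 0 π) :=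
    h3.const_mul ((2:ℝ)^x)
  refine h4.congr_fun (fun t ht => ?_) measurableSet_Ioo
  dsimp only
  rw [← mul_assoc, ← Real.rpow_add (by norm_num : (0:ℝ) < 2)]
  simp

lemma integral_sin_rpow (x : ℝ) (hx : -1 < x) :
    ∫ t in (0:ℝ)..π, Real.sin t ^ x
      = π * Real.Gamma (x+1) / ((2:ℝ)^x * Real.Gamma (1 + x/2) ^ 2) := by
  have himg := MeasureTheory.integral_image_eq_integral_abs_deriv_smul
    measurableSet_Ioo fsub_hasDerivWithin fsub_inj
    (fun s : ℝ => s ^ ((x-1)/2) * (1-s) ^ ((x-1)/2))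
  rw [fsub_image] at himg
  have hIoo : ∫ s in Ioo (0:ℝ) 1, s ^ ((x-1)/2) * (1-s) ^ ((x-1)/2)
      = Real.Gamma ((x+1)/2) ^ 2 / Real.Gamma (x+1) := by
    rw [← beta_value x hx, intervalIntegral.integral_of_le (by norm_num : (0:ℝ) ≤ 1)]
    exact MeasureTheory.setIntegral_congr_set Ioo_ae_eq_Ioc
  have hrhs : ∫ t in Ioo (0:ℝ) π, |Real.sin t / 2| •
      ((fsub t) ^ ((x-1)/2) * (1 - fsub t) ^ ((x-1)/2))
      = (2:ℝ)^(-x) * ∫ t in Ioo (0:ℝ) π, Real.sin t ^ x := by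
    rw [← MeasureTheory.integral_const_mul]
    exact MeasureTheory.setIntegral_congr_fun measurableSet_Ioo (fun t ht => comp_eq x ht)
  rw [hIoo, hrhs] at himg
  have hsin : ∫ t in (0:ℝ)..π, Real.sin t ^ x = ∫ t in Ioo (0:ℝ) π, Real.sin t ^ x := by
    rw [intervalIntegral.integral_of_le Real.pi_pos.le]
    exact MeasureTheory.setIntegral_congr_set Ioo_ae_eq_Ioc.symm
  rw [hsin]
  have h2x : ((2:ℝ)^(-x)) ≠ 0 := by positivity
  have hval : ∫ t in Ioo (0:ℝ) π, Real.sin t ^ x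
      = (2:ℝ)^x * (Real.Gamma ((x+1)/2) ^ 2 / Real.Gamma (x+1)) := by
    rw [himg, ← mul_assoc, ← Real.rpow_add (by norm_num : (0:ℝ) < 2)]
    simp
  rw [hval]
  -- duplication formula
  have hdup := Real.Gamma_mul_Gamma_add_half ((x+1)/2)
  rw [show (x+1)/2 + 1/2 = 1 + x/2 by ring, show 2 * ((x+1)/2) = x + 1 by ring,
    show (1 : ℝ) - (x+1) = -x by ring] at hdup
  have hG1 : Real.Gamma (1 + x/2) > 0 := Real.Gamma_pos_of_pos (by linarith)
  have hG2 : Real.Gamma (x+1) > 0 := Real.Gamma_pos_of_pos (by linarith)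
  have hsqpi : Real.sqrt π ^ 2 = π := Real.sq_sqrt Real.pi_pos.le
  have h2 : ((2:ℝ)^(-x)) * ((2:ℝ)^x) = 1 := by
    rw [← Real.rpow_add (by norm_num : (0:ℝ) < 2)]; simp
  have key2 : (Real.Gamma ((x+1)/2))^2 * (Real.Gamma (1 + x/2))^2
      = (Real.Gamma (x+1))^2 * ((2:ℝ)^(-x))^2 * π := by
    have := congrArg (fun y : ℝ => y^2) hdup
    simp only [mul_pow] at this
    rw [hsqpi] at this
    linarith [this]
  refine mul_right_cancel₀ (b := Real.Gamma (x+1) * ((2:ℝ)^x * Real.Gamma (1+x/2)^2))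
    (by positivity) ?_
  have lhs_eq : (2:ℝ)^x * (Real.Gamma ((x+1)/2)^2 / Real.Gamma (x+1))
      * (Real.Gamma (x+1) * ((2:ℝ)^x * Real.Gamma (1+x/2)^2))
      = (2:ℝ)^x * Real.Gamma ((x+1)/2)^2 * ((2:ℝ)^x * Real.Gamma (1+x/2)^2) := by
    field_simp
  have rhs_eq : π * Real.Gamma (x+1) / ((2:ℝ)^x * Real.Gamma (1+x/2)^2)
      * (Real.Gamma (x+1) * ((2:ℝ)^x * Real.Gamma (1+x/2)^2))
      = π * Real.Gamma (x+1) * Real.Gamma (x+1) := by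
    have hB : ((2:ℝ)^x * Real.Gamma (1+x/2)^2) ≠ 0 := by positivity
    calc π * Real.Gamma (x+1) / ((2:ℝ)^x * Real.Gamma (1+x/2)^2)
        * (Real.Gamma (x+1) * ((2:ℝ)^x * Real.Gamma (1+x/2)^2))
        = π * Real.Gamma (x+1) * Real.Gamma (x+1)
          * (((2:ℝ)^x * Real.Gamma (1+x/2)^2) / ((2:ℝ)^x * Real.Gamma (1+x/2)^2)) := by ring
      _ = π * Real.Gamma (x+1) * Real.Gamma (x+1) := by rw [div_self hB]; ring
  rw [lhs_eq, rhs_eq]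
  calc (2:ℝ)^x * Real.Gamma ((x+1)/2)^2 * ((2:ℝ)^x * Real.Gamma (1+x/2)^2)
      = ((2:ℝ)^(-x) * (2:ℝ)^x)^2 * ((Real.Gamma (x+1))^2 * π)
        + ((2:ℝ)^x)^2 * ((Real.Gamma ((x+1)/2))^2 * (Real.Gamma (1 + x/2))^2
            - (Real.Gamma (x+1))^2 * ((2:ℝ)^(-x))^2 * π) := by ring
    _ = π * Real.Gamma (x+1) * Real.Gamma (x+1) := by rw [h2, key2]; ring

lemma cos_mul_sin_rpow_intervalIntegrable (x : ℝ) (hx : -1 < x) (b : ℝ) :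
    IntervalIntegrable (fun t : ℝ => Real.cos (b*t) * Real.sin t ^ x) volume 0 π := by
  rw [intervalIntegrable_iff_integrableOn_Ioc_of_le Real.pi_pos.le]
  have h1 : IntegrableOn (fun t : ℝ => Real.cos (b*t) * Real.sin t ^ x) (Ioo 0 π) := by
    refine (sin_rpow_integrableOn x hx).bdd_mul (c := 1) ?_ (ae_of_all _ fun t => ?_)
    · exact (Real.continuous_cos.comp (continuous_const.mul continuous_id)).aestronglyMeasurable
    · exact Real.abs_cos_le_one _
  exact h1.congr_set_ae Ioo_ae_eq_Ioc.symm

lemma recurrence (x : ℝ) (hx : -1 < x) (a : ℝ) :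
    (x+1+a) * (∫ t in (0:ℝ)..π, Real.cos ((a+1)*t) * Real.sin t ^ x)
      + (x+1-a) * (∫ t in (0:ℝ)..π, Real.cos ((a-1)*t) * Real.sin t ^ x) = 0 := by
  set g : ℝ → ℝ := fun t => Real.sin t ^ (x+1) * Real.cos (a*t) with hg
  set D : ℝ → ℝ := fun t => (x+1+a)/2 * (Real.cos ((a+1)*t) * Real.sin t ^ x)
      + (x+1-a)/2 * (Real.cos ((a-1)*t) * Real.sin t ^ x) with hD
  have hcont : ContinuousOn g (Icc 0 π) := by
    apply ContinuousOn.mul ?_ (Real.continuous_cos.comp (continuous_const.mul continuous_id)).continuousOn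
    apply ContinuousOn.rpow_const Real.continuous_sin.continuousOn
    intro t _; right; linarith
  have hderiv : ∀ t ∈ Ioo (0:ℝ) π, HasDerivWithinAt g (D t) (Ioi t) t := by
    intro t ht
    have hst : 0 < Real.sin t := Real.sin_pos_of_pos_of_lt_pi ht.1 ht.2
    have h1 : HasDerivAt (fun t : ℝ => Real.sin t ^ (x+1))
        ((x+1) * Real.sin t ^ x * Real.cos t) t := by
      have := (Real.hasDerivAt_rpow_const (x := Real.sin t) (p := x+1)
        (Or.inl hst.ne')).comp t (Real.hasDerivAt_sin t)
      simpa [Function.comp_def, show x + 1 - 1 = x by ring, mul_comm, mul_assoc, mul_left_comm] using this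
    have h2 : HasDerivAt (fun t : ℝ => Real.cos (a*t)) (-a * Real.sin (a*t)) t := by
      have := (Real.hasDerivAt_cos (a*t)).comp t ((hasDerivAt_id t).const_mul a)
      simpa [Function.comp_def, mul_comm] using this
    have h3 := h1.mul h2
    have heq : (x+1) * Real.sin t ^ x * Real.cos t * Real.cos (a*t)
        + Real.sin t ^ (x+1) * (-a * Real.sin (a*t)) = D t := by
      rw [Real.rpow_add_one hst.ne']
      simp only [hD]
      rw [show (a+1)*t = a*t + t by ring, show (a-1)*t = a*t - t by ring,
        Real.cos_add, Real.cos_sub]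
      ring
    rw [heq] at h3
    exact h3.hasDerivWithinAt
  have hint : IntervalIntegrable D volume 0 π := by
    apply IntervalIntegrable.add
    · exact (cos_mul_sin_rpow_intervalIntegrable x hx (a+1)).const_mul _
    · exact (cos_mul_sin_rpow_intervalIntegrable x hx (a-1)).const_mul _
  have hftc := intervalIntegral.integral_eq_sub_of_hasDeriv_right_of_le Real.pi_pos.le
    hcont hderiv hint
  have hg0 : g 0 = 0 := by
    simp only [hg, Real.sin_zero]
    rw [Real.zero_rpow (by linarith : x + 1 ≠ 0)]
    ring
  have hgpi : g π = 0 := by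
    simp only [hg, Real.sin_pi]
    rw [Real.zero_rpow (by linarith : x + 1 ≠ 0)]
    ring
  rw [hg0, hgpi, sub_zero] at hftc
  have hsplit : ∫ t in (0:ℝ)..π, D t
      = (x+1+a)/2 * (∫ t in (0:ℝ)..π, Real.cos ((a+1)*t) * Real.sin t ^ x)
      + (x+1-a)/2 * (∫ t in (0:ℝ)..π, Real.cos ((a-1)*t) * Real.sin t ^ x) := by
    rw [intervalIntegral.integral_add ((cos_mul_sin_rpow_intervalIntegrable x hx (a+1)).const_mul _)
      ((cos_mul_sin_rpow_intervalIntegrable x hx (a-1)).const_mul _),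
      intervalIntegral.integral_const_mul, intervalIntegral.integral_const_mul]
  rw [hsplit] at hftc
  linarith [hftc]

lemma Cvalue (x : ℝ) (hx : -1 < x) (n : ℕ) :
    ∫ t in (0:ℝ)..π, Real.cos ((2*n : ℝ)*t) * Real.sin t ^ x
      = π * (-1)^n * Real.Gamma (x+1)
        / ((2:ℝ)^x * Real.Gamma (1 + x/2 + n) * Real.Gamma (1 + x/2 - n)) := by
  induction n with
  | zero =>
    simp only [Nat.cast_zero, mul_zero, zero_mul, Real.cos_zero, one_mul, pow_zero,
      add_zero, sub_zero]
    rw [integral_sin_rpow x hx]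
    ring
  | succ n ih =>
    have hrec := recurrence x hx (2*n+1)
    rw [show (2*(n:ℝ)+1)+1 = 2*((n:ℕ)+1 : ℕ) by push_cast; ring,
      show (2*(n:ℝ)+1)-1 = 2*(n:ℕ) by push_cast; ring] at hrec
    push_cast at hrec ih ⊢
    have hn0 : (0:ℝ) ≤ n := n.cast_nonneg
    have hP : (0:ℝ) < 1 + x/2 + n := by linarith
    have hGA : Real.Gamma (1+x/2+((n:ℝ)+1)) = (1+x/2+n) * Real.Gamma (1+x/2+n) := by
      rw [show 1+x/2+((n:ℝ)+1) = (1+x/2+(n:ℝ))+1 by ring, Real.Gamma_add_one hP.ne']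
    have hI1 : (∫ t in (0:ℝ)..π, Real.cos (2*((n:ℝ)+1)*t) * Real.sin t ^ x)
        = -((x+1-(2*(n:ℝ)+1)) * ∫ t in (0:ℝ)..π, Real.cos (2*(n:ℝ)*t) * Real.sin t ^ x)
          / (x+1+(2*(n:ℝ)+1)) := by
      rw [eq_div_iff (by linarith : x+1+(2*(n:ℝ)+1) ≠ 0)]
      linarith [hrec]
    rw [hI1, ih, hGA, show 1+x/2-((n:ℝ)+1) = x/2-(n:ℝ) by ring]
    by_cases hu : x/2 - (n:ℝ) = 0
    · rw [show x+1-(2*(n:ℝ)+1) = 2*(x/2-(n:ℝ)) by ring, hu, Real.Gamma_zero]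
      simp
    · rw [show 1+x/2-(n:ℝ) = (x/2-(n:ℝ))+1 by ring, Real.Gamma_add_one hu]
      by_cases hg : Real.Gamma (x/2-(n:ℝ)) = 0
      · rw [hg]; simp
      · have hGApos : Real.Gamma (1+x/2+(n:ℝ)) ≠ 0 := (Real.Gamma_pos_of_pos hP).ne'
        have h2x : ((2:ℝ)^x) ≠ 0 := by positivity
        have hD : x+1+(2*(n:ℝ)+1) ≠ 0 := by linarith
        rw [← mul_div_assoc, ← neg_div, div_div]
        rw [div_eq_div_iff
          (by exact mul_ne_zero (mul_ne_zero (mul_ne_zero h2x hGApos) (mul_ne_zero hu hg)) hD)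
          (by exact mul_ne_zero (mul_ne_zero h2x (mul_ne_zero hP.ne' hGApos)) hg)]
        ring

lemma main_nat (x : ℝ) (hx : -1 < x) (n : ℕ) :
    ∫ y in (0:ℝ)..(2 * Real.pi), Real.cos (n * y) * Real.sin (y / 2) ^ x
      = 2 * Real.pi * Real.cos (n * Real.pi) * Real.Gamma (x + 1) /
        ((2 : ℝ) ^ x * Real.Gamma (1 + x / 2 + n) * Real.Gamma (1 + x / 2 - n)) := by
  have hsub := intervalIntegral.integral_comp_mul_left
    (a := 0) (b := π) (c := 2)
    (fun y => Real.cos ((n:ℝ) * y) * Real.sin (y / 2) ^ x) two_ne_zero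
  rw [mul_zero] at hsub
  have hleft : (∫ t in (0:ℝ)..π, Real.cos ((n:ℝ) * (2*t)) * Real.sin ((2*t) / 2) ^ x)
      = ∫ t in (0:ℝ)..π, Real.cos ((2*(n:ℝ))*t) * Real.sin t ^ x := by
    refine intervalIntegral.integral_congr (fun t _ => ?_)
    rw [show (n:ℝ) * (2*t) = (2*(n:ℝ))*t by ring, show (2*t)/2 = t by ring]
  rw [hleft, Cvalue x hx n] at hsub
  have hcos : Real.cos ((n:ℝ) * π) = (-1)^n := by
    simpa using Real.cos_add_nat_mul_pi 0 n
  rw [hcos]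
  have : (∫ y in (0:ℝ)..(2*π), Real.cos ((n:ℝ) * y) * Real.sin (y / 2) ^ x)
      = 2 * (π * (-1)^n * Real.Gamma (x+1)
        / ((2:ℝ)^x * Real.Gamma (1 + x/2 + n) * Real.Gamma (1 + x/2 - n))) := by
    rw [hsub]; simp
  rw [this]; ring

theorem integral_cos_mul_sin_half_pow (x : ℝ) (hx : x > -1) (k : ℤ) :
    ∫ y in (0:ℝ)..(2 * Real.pi), Real.cos (k * y) * Real.sin (y / 2) ^ x
      = 2 * Real.pi * Real.cos (k * Real.pi) * Real.Gamma (x + 1) /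
        ((2 : ℝ) ^ x * Real.Gamma (1 + x / 2 + k) * Real.Gamma (1 + x / 2 - k)) := by
  rcases Int.natAbs_eq k with hk | hk
  · rw [hk]; simp only [Int.cast_natCast]
    exact main_nat x hx k.natAbs
  · rw [hk]; simp only [Int.cast_neg, Int.cast_natCast]
    have hL : (∫ y in (0:ℝ)..(2*π), Real.cos (-(k.natAbs:ℝ) * y) * Real.sin (y / 2) ^ x)
        = ∫ y in (0:ℝ)..(2*π), Real.cos ((k.natAbs:ℝ) * y) * Real.sin (y / 2) ^ x := by
      refine intervalIntegral.integral_congr (fun y _ => ?_)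
      rw [neg_mul, Real.cos_neg]
    rw [hL, main_nat x hx k.natAbs, neg_mul, Real.cos_neg]
    rw [show 1 + x/2 + -(k.natAbs:ℝ) = 1 + x/2 - (k.natAbs:ℝ) by ring,
      show 1 + x/2 - -(k.natAbs:ℝ) = 1 + x/2 + (k.natAbs:ℝ) by ring]
    ring
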